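/- For every regular expression pattern P, every bindable node n of P, and every regular context language C, the type type(n, P, C) = { w | ∃ w' ∈ C, w' ⊢ P ⇒ V, V(n) = w } is a regular language. -/

import Mathlib

open Computability Classical


/-- Regular expression patterns over an alphabet `A`. -/
inductive Pat (A : Type) : Type
  | eps : Pat A
  | ch : A → Pat A
  | plus : Pat A → Pat A → Pat A
  | cat : Pat A → Pat A → Pat A
  | star : Pat A → Pat A

/-- The language of a pattern (the usual regular-expression language). -/
def Pat.lang {A : Type} : Pat A → Language A
  | .eps => 1
  | .ch a => {[a]}
  | .plus p q => p.lang + q.lang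
  | .cat p q => p.lang * q.lang
  | .star p => KStar.kstar p.lang

/-- Node addresses in the syntax tree of a pattern: `[]` is the root, `1 :: n`
addresses node `n` in the left child, `2 :: n` in the right child. -/
abbrev Node := List ℕ

/-- Bindable nodes: nodes of the syntax tree having no `*`-labeled ancestor
(the root is always bindable; below a `star` nothing is bindable). -/
def Pat.Bindable {A : Type} : Pat A → Node → Prop
  | _, [] => True
  | .plus p _, 1 :: n => p.Bindable n
  | .plus _ q, 2 :: n => q.Bindable n
  | .cat p _, 1 :: n => p.Bindable n
  | .cat _ q, 2 :: n => q.Bindable n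
  | _, _ => False

/-- Associations: a map from node addresses to a matched subword (`some w`) or
`⊥` (`none`). -/
abbrev Assoc (A : Type) := Node → Option (List A)

/-- The association `[λ → w]` binding only the root. -/
def single {A : Type} (w : List A) : Assoc A :=
  fun n => if n = [] then some w else none

/-- `V + P₂`: push the associations of `V` into the left branch of a
disjunction; all nodes of the right branch get `⊥`. -/
def orL {A : Type} (V : Assoc A) : Assoc A
  | [] => V []
  | 1 :: m => V m
  | _ => none

/-- `P₁ + V`: push the associations of `V` into the right branch of a
disjunction; all nodes of the left branch get `⊥`. -/
def orR {A : Type} (V : Assoc A) : Assoc A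
  | [] => V []
  | 2 :: m => V m
  | _ => none

/-- `V₁ · V₂`: the association for a concatenation node. -/
def catA {A : Type} (V₁ V₂ : Assoc A) : Assoc A
  | [] => match V₁ [], V₂ [] with
          | some u, some v => some (u ++ v)
          | _, _ => none
  | 1 :: m => V₁ m
  | 2 :: m => V₂ m
  | _ => none

mutual
/-- The matching relation `w ⊢ P ⇒ V` of the paper's Figure 2, with the
first-match policy for `+` (rules Or2/COr2) and the longest-match policy for
Kleene star in a concatenation (rule CKleene). -/
inductive Match {A : Type} : List A → Pat A → Assoc A → Prop
  | empty : Match [] .eps (single [])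
  | lab (a : A) : Match [a] (.ch a) (single [a])
  | kleeneEmpty (P : Pat A) : Match [] (.star P) (single [])
  | kleeneClosure {w₁ w₂ : List A} {P : Pat A} {V₁ V₂ : Assoc A} :
      Match w₁ P V₁ → Match w₂ (.star P) V₂ → w₁ ≠ [] →
      Match (w₁ ++ w₂) (.star P) (single (w₁ ++ w₂))
  | or1 {w : List A} {P₁ P₂ : Pat A} {V : Assoc A} :
      Match w P₁ V → Match w (.plus P₁ P₂) (orL V)
  | or2 {w : List A} {P₁ P₂ : Pat A} {V : Assoc A} :
      Match w P₂ V → w ∉ P₁.lang → Match w (.plus P₁ P₂) (orR V)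
  | celem {w₁ w₂ : List A} {P₁ P₂ : Pat A} {V₁ V₂ : Assoc A} :
      CMatch w₁ w₂ P₁ P₂ V₁ V₂ → Match (w₁ ++ w₂) (.cat P₁ P₂) (catA V₁ V₂)

/-- The auxiliary relation `(w₁, w₂) ⊢ P₁ · P₂ ⇒ (V₁, V₂)`: when matching
`w₁w₂` against `P₁ · P₂`, pattern `P₁` matches `w₁` yielding `V₁` and `P₂`
matches `w₂` yielding `V₂`. -/
inductive CMatch {A : Type} : List A → List A → Pat A → Pat A → Assoc A → Assoc A → Prop
  | cempty {w : List A} {P : Pat A} {V₂ : Assoc A} :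
      Match w P V₂ → CMatch [] w .eps P (single []) V₂
  | clab {a : A} {w : List A} {P : Pat A} {V₁ V₂ : Assoc A} :
      Match [a] (.ch a) V₁ → Match w P V₂ → CMatch [a] w (.ch a) P V₁ V₂
  | cor1 {w₁ w₂ : List A} {P₁ P₂ P₃ : Pat A} {V₁ V₂ : Assoc A} :
      CMatch w₁ w₂ P₁ P₃ V₁ V₂ →
      CMatch w₁ w₂ (.plus P₁ P₂) P₃ (orL V₁) V₂
  | cor2 {w₁ w₂ : List A} {P₁ P₂ P₃ : Pat A} {V₁ V₂ : Assoc A} :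
      CMatch w₁ w₂ P₂ P₃ V₁ V₂ → w₁ ++ w₂ ∉ (Pat.cat P₁ P₃).lang →
      CMatch w₁ w₂ (.plus P₁ P₂) P₃ (orR V₁) V₂
  | ccon {w₁ w₂ w₃ : List A} {P₁ P₂ P₃ : Pat A} {V₁ V₂ V₃ W : Assoc A} :
      CMatch w₁ (w₂ ++ w₃) P₁ (.cat P₂ P₃) V₁ W →
      CMatch w₂ w₃ P₂ P₃ V₂ V₃ →
      CMatch (w₁ ++ w₂) w₃ (.cat P₁ P₂) P₃ (catA V₁ V₂) V₃
  | ckleene {w₁ w₂ : List A} {P₁ P₂ : Pat A} {V₁ V₂ : Assoc A} :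
      Match w₁ (.star P₁) V₁ → Match w₂ P₂ V₂ →
      (¬ ∃ w₃ w₄, w₃ ≠ [] ∧ w₂ = w₃ ++ w₄ ∧
        w₁ ++ w₃ ∈ (Pat.star P₁).lang ∧ w₄ ∈ P₂.lang) →
      CMatch w₁ w₂ (.star P₁) P₂ V₁ V₂
end

/-- The type of node `n` of pattern `P` relative to a context language `C`:
all subwords that `n` can be associated with when matching a word of `C`
against `P`. -/
def typeOf {A : Type} (n : Node) (P : Pat A) (C : Set (List A)) : Set (List A) :=
  {w | ∃ w' ∈ C, ∃ V, Match w' P V ∧ V n = some w}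



/-! ### Auxiliary development -/


open Computability Classical

namespace PatReg

open Classical in
/-- Any "pointwise Boolean combination" of finitely many regular languages is regular. -/
theorem isRegular_boolComb {A : Type} {ι : Type} [Fintype ι] (L : ι → Language A)
    (h : ∀ i, (L i).IsRegular) (S : Set (ι → Prop)) :
    Language.IsRegular {w | (fun i => w ∈ L i) ∈ S} := by
  choose σ fσ M hM using h
  haveI := fσ
  refine ⟨∀ i, σ i, by infer_instance, ⟨fun s a i => (M i).step (s i) a, fun i => (M i).start,
    {s | (fun i => s i ∈ (M i).accept) ∈ S}⟩, ?_⟩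
  have key : ∀ (w : List A) (s : ∀ i, σ i),
      DFA.evalFrom ⟨fun s a i => (M i).step (s i) a, fun i => (M i).start,
        {s | (fun i => s i ∈ (M i).accept) ∈ S}⟩ s w = fun i => (M i).evalFrom (s i) w := by
    intro w
    induction w with
    | nil => intro s; rfl
    | cons a w ih => intro s; exact ih _
  ext w
  have hw : ∀ i, (w ∈ L i) = ((M i).evalFrom (M i).start w ∈ (M i).accept) := by
    intro i; rw [← hM i]; rfl
  simp only [DFA.mem_accepts, DFA.eval, key, Set.mem_setOf_eq]
  have : (fun i => w ∈ L i) = fun i => (M i).evalFrom (M i).start w ∈ (M i).accept := by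
    funext i; rw [hw i]
  change _ ↔ ((fun i => w ∈ L i) ∈ S)
  rw [this]

theorem isRegular_top {A : Type} : (⊤ : Language A).IsRegular := by
  have := isRegular_boolComb (A := A) (ι := PEmpty) (fun i => ⊤) (fun i => i.elim)
    Set.univ
  simp at this; exact this

theorem Language.IsRegular.compl' {A : Type} {L : Language A} (h : L.IsRegular) :
    Language.IsRegular (fun w => w ∉ L) := by
  have := isRegular_boolComb (A := A) (ι := PUnit) (fun _ => L) (fun _ => h)
    {p | ¬ p PUnit.unit}
  exact this

theorem Language.IsRegular.inter' {A : Type} {L M : Language A} (hL : L.IsRegular)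
    (hM : M.IsRegular) : Language.IsRegular (fun w => w ∈ L ∧ w ∈ M) := by
  have := isRegular_boolComb (A := A) (ι := Bool) (fun b => if b then L else M)
    (by rintro (_|_) <;> simpa) {p | p true ∧ p false}
  exact this

theorem Language.IsRegular.union' {A : Type} {L M : Language A} (hL : L.IsRegular)
    (hM : M.IsRegular) : Language.IsRegular (fun w => w ∈ L ∨ w ∈ M) := by
  have := isRegular_boolComb (A := A) (ι := Bool) (fun b => if b then L else M)
    (by rintro (_|_) <;> simpa) {p | p true ∨ p false}
  exact this

open Classical in
theorem isRegular_iUnion {A : Type} {ι : Type} [Fintype ι] (L : ι → Language A)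
    (h : ∀ i, (L i).IsRegular) : Language.IsRegular (fun w => ∃ i, w ∈ L i) := by
  have := isRegular_boolComb L h {p | ∃ i, p i}
  exact this


lemma append_singleton_eq_append_iff {A : Type} {w u v : List A} {a : A} :
    w ++ [a] = u ++ v ↔ (v = [] ∧ u = w ++ [a]) ∨ ∃ v', v = v' ++ [a] ∧ w = u ++ v' := by
  constructor
  · intro h
    rcases List.eq_nil_or_concat v with rfl | ⟨v', b, rfl⟩
    · exact Or.inl ⟨rfl, by simpa using h.symm⟩
    · rw [List.concat_eq_append, ← List.append_assoc] at h
      obtain ⟨h1, h2⟩ := List.append_inj' h (by simp)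
      obtain rfl : a = b := by simpa using h2
      exact Or.inr ⟨v', List.concat_eq_append, h1⟩
  · rintro (⟨rfl, rfl⟩ | ⟨v', rfl, rfl⟩) <;> simp

lemma isRegular_one {A : Type} : (1 : Language A).IsRegular := by
  refine ⟨Bool, by infer_instance, ⟨fun _ _ => false, true, {true}⟩, ?_⟩
  have key : ∀ w : List A, DFA.evalFrom ⟨fun _ _ => false, true, ({true} : Set Bool)⟩ false w = false := by
    intro w; induction w with
    | nil => rfl
    | cons a w ih => exact ih
  ext w
  cases w with
  | nil => simp [DFA.mem_accepts, Language.mem_one]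
  | cons a w =>
    simp only [DFA.mem_accepts, Language.mem_one]
    show DFA.evalFrom _ false w ∈ _ ↔ _
    rw [key]
    simp

open Classical in
lemma isRegular_char {A : Type} (a : A) : ({[a]} : Language A).IsRegular := by
  classical
  refine ⟨Fin 3, by infer_instance,
    ⟨fun s b => if s = 0 ∧ b = a then 1 else 2, 0, {1}⟩, ?_⟩
  set M : DFA A (Fin 3) := ⟨fun s b => if s = 0 ∧ b = a then 1 else 2, 0, {1}⟩ with hMdef
  have key : ∀ (w : List A) (s : Fin 3), s ≠ 0 → M.evalFrom s w = if w = [] then s else 2 := by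
    intro w
    induction w with
    | nil => intro s _; simp [DFA.evalFrom]
    | cons b w ih =>
      intro s hs
      show M.evalFrom (M.step s b) w = _
      have hstep : M.step s b = 2 := by
        simp only [hMdef]
        simp [hs]
      rw [hstep, ih 2 (by decide)]
      by_cases h : w = [] <;> simp [h]
  ext w
  cases w with
  | nil =>
    simp only [DFA.mem_accepts]
    constructor
    · intro h
      exact absurd h (by simp [hMdef])
    · intro h
      exact absurd h (by intro hh; cases hh)
  | cons b w =>
    simp only [DFA.mem_accepts]
    show M.evalFrom (M.step 0 b) w ∈ M.accept ↔ _
    by_cases hb : b = a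
    · subst hb
      have hstep : M.step 0 b = 1 := by simp [hMdef]
      rw [hstep, key w 1 (by decide)]
      by_cases h : w = []
      · subst h; simp [hMdef]; rfl
      · simp only [h, if_false]
        constructor
        · intro hh; exact absurd hh (by simp [hMdef])
        · intro hh
          have : b :: w = [b] := hh
          simp at this
          exact absurd this h
    · have hstep : M.step 0 b = 2 := by
        simp only [hMdef]; simp [hb]
      rw [hstep, key w 2 (by decide)]
      have h2 : (if w = [] then (2 : Fin 3) else 2) = 2 := by simp
      rw [h2]
      constructor
      · intro hh; exact absurd hh (by simp [hMdef])
      · intro hh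
        have : b :: w = [a] := hh
        simp at this
        exact absurd this.1 hb



open Classical in
/-- Concatenation of regular languages is regular. -/
theorem IsRegular.mulL {A : Type} {L M : Language A} (hL : L.IsRegular) (hM : M.IsRegular) :
    (L * M).IsRegular := by
  classical
  obtain ⟨σ₁, f₁, M₁, rfl⟩ := hL
  obtain ⟨σ₂, f₂, M₂, rfl⟩ := hM
  let N : DFA A (σ₁ × Set σ₂) :=
    ⟨fun p a =>
      (M₁.step p.1 a,
        (fun t => M₂.step t a) '' p.2 ∪ (if M₁.step p.1 a ∈ M₁.accept then {M₂.start} else ∅)),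
      (M₁.start, if M₁.start ∈ M₁.accept then {M₂.start} else ∅),
      {p | ∃ t ∈ p.2, t ∈ M₂.accept}⟩
  refine ⟨σ₁ × Set σ₂, by infer_instance, N, ?_⟩
  have key : ∀ w : List A,
      N.eval w = (M₁.eval w,
        {q | ∃ u v, w = u ++ v ∧ u ∈ M₁.accepts ∧ M₂.evalFrom M₂.start v = q}) := by
    intro w
    induction w using List.reverseRecOn with
    | nil =>
      show N.start = _
      refine Prod.ext rfl ?_
      show (if M₁.start ∈ M₁.accept then {M₂.start} else (∅ : Set σ₂)) =
        {q | ∃ u v, [] = u ++ v ∧ u ∈ M₁.accepts ∧ M₂.evalFrom M₂.start v = q}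
      ext q
      constructor
      · intro hq
        by_cases h : M₁.start ∈ M₁.accept
        · rw [if_pos h] at hq
          exact ⟨[], [], rfl, by rwa [DFA.mem_accepts], by simpa using hq.symm⟩
        · rw [if_neg h] at hq; exact absurd hq (Set.notMem_empty q)
      · rintro ⟨u, v, huv, hu, rfl⟩
        obtain ⟨rfl, rfl⟩ : u = [] ∧ v = [] := by
          simpa using huv.symm
        rw [if_pos (by rwa [DFA.mem_accepts] at hu)]
        rfl
    | append_singleton w a ih =>
      rw [DFA.eval_append_singleton, ih]
      refine Prod.ext (by simp [N]) ?_
      show (fun t => M₂.step t a) '' _ ∪ _ = _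
      ext q
      simp only [Set.mem_union, Set.mem_image, Set.mem_setOf_eq]
      constructor
      · rintro (⟨t, ⟨u, v, rfl, hu, rfl⟩, rfl⟩ | hq)
        · exact ⟨u, v ++ [a], by simp, hu, by simp [DFA.evalFrom_append_singleton]⟩
        · by_cases h : M₁.step (M₁.eval w) a ∈ M₁.accept
          · rw [if_pos h] at hq
            refine ⟨w ++ [a], [], by simp, ?_, by simpa using hq.symm⟩
            rw [DFA.mem_accepts, DFA.eval_append_singleton]
            exact h
          · rw [if_neg h] at hq; exact absurd hq (Set.notMem_empty q)
      · rintro ⟨u, v, huv, hu, rfl⟩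
        rcases append_singleton_eq_append_iff.mp huv with ⟨rfl, rfl⟩ | ⟨v', rfl, rfl⟩
        · right
          rw [DFA.mem_accepts, DFA.eval_append_singleton] at hu
          rw [if_pos hu]
          rfl
        · left
          exact ⟨M₂.evalFrom M₂.start v', ⟨u, v', rfl, hu, rfl⟩,
            (DFA.evalFrom_append_singleton _ _ _ _).symm⟩
  ext w
  rw [DFA.mem_accepts]
  show (∃ t ∈ (N.eval w).2, t ∈ M₂.accept) ↔ _
  rw [key]
  simp only [Set.mem_setOf_eq]
  rw [Language.mem_mul]
  constructor
  · rintro ⟨t, ⟨u, v, rfl, hu, rfl⟩, ht⟩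
    exact ⟨u, hu, v, by rwa [DFA.mem_accepts], rfl⟩
  · rintro ⟨u, hu, v, hv, rfl⟩
    exact ⟨M₂.evalFrom M₂.start v, ⟨u, v, rfl, hu, rfl⟩, by rwa [DFA.mem_accepts] at hv⟩

lemma kstar_last_block {A : Type} {L : Language A} {x : List A} (hx : x ∈ L∗) :
    x = [] ∨ ∃ u v, x = u ++ v ∧ u ∈ L∗ ∧ v ∈ L ∧ v ≠ [] := by
  rw [Language.mem_kstar_iff_exists_nonempty] at hx
  obtain ⟨S, rfl, hS⟩ := hx
  rcases List.eq_nil_or_concat S with rfl | ⟨S', y, rfl⟩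
  · exact Or.inl rfl
  · right
    refine ⟨S'.flatten, y, by simp, ?_, (hS y (by simp)).1, (hS y (by simp)).2⟩
    exact Language.join_mem_kstar fun z hz => (hS z (by simp [hz])).1

open Classical in
/-- The Kleene star of a regular language is regular. -/
theorem IsRegular.kstarL {A : Type} {L : Language A} (hL : L.IsRegular) :
    (L∗).IsRegular := by
  classical
  obtain ⟨σ, fσ, M, rfl⟩ := hL
  -- first: the language `M.accepts∗ * M.accepts` is regular
  have main : (M.accepts∗ * M.accepts).IsRegular := by
    let N : DFA A (Set σ) :=
      ⟨fun T a =>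
        (fun t => M.step t a) '' T ∪
          (if ∃ t ∈ T, M.step t a ∈ M.accept then {M.start} else ∅),
        {M.start},
        {T | ∃ t ∈ T, t ∈ M.accept}⟩
    refine ⟨Set σ, by infer_instance, N, ?_⟩
    have key : ∀ w : List A,
        N.eval w = {q | ∃ u v, w = u ++ v ∧ u ∈ M.accepts∗ ∧ M.evalFrom M.start v = q} := by
      intro w
      induction w using List.reverseRecOn with
      | nil =>
        show {M.start} = _
        ext q
        simp only [Set.mem_singleton_iff, Set.mem_setOf_eq]
        constructor
        · rintro rfl; exact ⟨[], [], rfl, Language.nil_mem_kstar _, rfl⟩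
        · rintro ⟨u, v, huv, hu, rfl⟩
          obtain ⟨rfl, rfl⟩ : u = [] ∧ v = [] := by simpa using huv.symm
          rfl
      | append_singleton w a ih =>
        rw [DFA.eval_append_singleton, ih]
        show (fun t => M.step t a) '' _ ∪ _ = _
        ext q
        simp only [Set.mem_union, Set.mem_image, Set.mem_setOf_eq]
        constructor
        · rintro (⟨t, ⟨u, v, rfl, hu, rfl⟩, rfl⟩ | hq)
          · exact ⟨u, v ++ [a], by simp, hu, by simp [DFA.evalFrom_append_singleton]⟩
          · by_cases h : ∃ t, (∃ u v, w = u ++ v ∧ u ∈ M.accepts∗ ∧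
                M.evalFrom M.start v = t) ∧ M.step t a ∈ M.accept
            · rw [if_pos h] at hq
              obtain ⟨t, ⟨u, v, rfl, hu, rfl⟩, ht⟩ := h
              refine ⟨(u ++ v) ++ [a], [], by simp, ?_, by simpa using hq.symm⟩
              have hv : v ++ [a] ∈ M.accepts := by
                rw [DFA.mem_accepts, DFA.eval_append_singleton]
                exact ht
              have : u ++ (v ++ [a]) ∈ M.accepts∗ * M.accepts :=
                Language.mem_mul.mpr ⟨u, hu, v ++ [a], hv, rfl⟩
              have hle : M.accepts∗ * M.accepts ≤ M.accepts∗ := by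
                conv_rhs => rw [← Language.one_add_kstar_mul_self_eq_kstar M.accepts]
                exact le_sup_right
              have := hle this
              simpa [List.append_assoc] using (show u ++ (v ++ [a]) ∈ M.accepts∗ from this)
            · rw [if_neg h] at hq; exact absurd hq (Set.notMem_empty q)
        · rintro ⟨u, v, huv, hu, rfl⟩
          rcases append_singleton_eq_append_iff.mp huv with ⟨rfl, rfl⟩ | ⟨v', rfl, rfl⟩
          · right
            rcases kstar_last_block hu with h0 | ⟨x, y, hxy, hx, hy, hyne⟩
            · exact absurd h0 (by simp)
            · obtain ⟨y', rfl, rfl⟩ : ∃ y', y = y' ++ [a] ∧ w = x ++ y' := by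
                rcases append_singleton_eq_append_iff.mp hxy with ⟨rfl, rfl⟩ | h
                · exact absurd rfl hyne
                · exact h
              rw [if_pos ?_]
              · rfl
              · refine ⟨M.evalFrom M.start y', ⟨x, y', rfl, hx, rfl⟩, ?_⟩
                have h2 : M.evalFrom M.start (y' ++ [a]) ∈ M.accept := hy
                rwa [DFA.evalFrom_append_singleton] at h2
          · left
            exact ⟨M.evalFrom M.start v', ⟨u, v', rfl, hu, rfl⟩,
              (DFA.evalFrom_append_singleton _ _ _ _).symm⟩
    ext w
    rw [DFA.mem_accepts]
    show (∃ t ∈ N.eval w, t ∈ M.accept) ↔ _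
    rw [key, Language.mem_mul]
    constructor
    · rintro ⟨t, ⟨u, v, rfl, hu, rfl⟩, ht⟩
      exact ⟨u, hu, v, by rwa [DFA.mem_accepts], rfl⟩
    · rintro ⟨u, hu, v, hv, rfl⟩
      exact ⟨M.evalFrom M.start v, ⟨u, v, rfl, hu, rfl⟩, by rwa [DFA.mem_accepts] at hv⟩
  have heq : M.accepts∗ = 1 + M.accepts∗ * M.accepts :=
    (Language.one_add_kstar_mul_self_eq_kstar _).symm
  rw [heq]
  have h1 : ((1 : Language A) + M.accepts∗ * M.accepts) =
      (fun w => w ∈ (1 : Language A) ∨ w ∈ M.accepts∗ * M.accepts) := by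
    ext w; exact Language.mem_add _ _ _
  rw [h1]
  exact Language.IsRegular.union' isRegular_one main


theorem isRegular_add {A : Type} {L M : Language A} (hL : L.IsRegular) (hM : M.IsRegular) :
    (L + M).IsRegular := by
  have h1 : (L + M) = (fun w => w ∈ L ∨ w ∈ M) := by ext w; exact Language.mem_add _ _ _
  rw [h1]
  exact Language.IsRegular.union' hL hM

theorem isRegular_inter {A : Type} {L M : Language A} (hL : L.IsRegular) (hM : M.IsRegular) :
    Language.IsRegular {w : List A | w ∈ L ∧ w ∈ M} :=
  Language.IsRegular.inter' hL hM

theorem isRegular_diff {A : Type} {L M : Language A} (hL : L.IsRegular) (hM : M.IsRegular) :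
    Language.IsRegular {w : List A | w ∈ L ∧ w ∉ M} :=
  Language.IsRegular.inter' hL (Language.IsRegular.compl' hM)

theorem isRegular_empty {A : Type} : Language.IsRegular (∅ : Set (List A)) := by
  have := isRegular_boolComb (A := A) (ι := PEmpty) (fun i => ⊤) (fun i => i.elim) ∅
  exact this

theorem isRegular_evalTo {A σ : Type} [Fintype σ] (M : DFA A σ) (s : σ) :
    Language.IsRegular {x : List A | M.eval x = s} := by
  refine ⟨σ, by infer_instance, ⟨M.step, M.start, {s}⟩, ?_⟩
  ext x
  rw [DFA.mem_accepts]
  exact Set.mem_singleton_iff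

theorem isRegular_evalFromAcc {A σ : Type} [Fintype σ] (M : DFA A σ) (s : σ) :
    Language.IsRegular {x : List A | M.evalFrom s x ∈ M.accept} := by
  exact ⟨σ, by infer_instance, ⟨M.step, s, M.accept⟩, rfl⟩

end PatReg

open Classical

/-- The disambiguated split relation for matching `w₁ ++ w₂` against `P · Q`. -/
def Sp {A : Type} : Pat A → Pat A → List A → List A → Prop
  | .eps, Q, w₁, w₂ => w₁ = [] ∧ w₂ ∈ Q.lang
  | .ch a, Q, w₁, w₂ => w₁ = [a] ∧ w₂ ∈ Q.lang
  | .plus P₁ P₂, Q, w₁, w₂ => Sp P₁ Q w₁ w₂ ∨ (Sp P₂ Q w₁ w₂ ∧ w₁ ++ w₂ ∉ P₁.lang * Q.lang)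
  | .cat P₁ P₂, Q, w₁, w₂ => ∃ a b, w₁ = a ++ b ∧ Sp P₁ (.cat P₂ Q) a (b ++ w₂) ∧ Sp P₂ Q b w₂
  | .star P, Q, w₁, w₂ => w₁ ∈ (Pat.star P).lang ∧ w₂ ∈ Q.lang ∧
      ¬ ∃ w₃ w₄, w₃ ≠ [] ∧ w₂ = w₃ ++ w₄ ∧ w₁ ++ w₃ ∈ (Pat.star P).lang ∧ w₄ ∈ Q.lang

lemma Sp_lang {A : Type} : ∀ (P Q : Pat A) (w₁ w₂ : List A), Sp P Q w₁ w₂ →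
    w₁ ∈ P.lang ∧ w₂ ∈ Q.lang
  | .eps, Q, w₁, w₂, h => ⟨h.1 ▸ (by exact Language.nil_mem_one ..), h.2⟩
  | .ch a, Q, w₁, w₂, h => ⟨h.1 ▸ rfl, h.2⟩
  | .plus P₁ P₂, Q, w₁, w₂, h => by
    rcases h with h | ⟨h, _⟩
    · have := Sp_lang P₁ Q w₁ w₂ h
      exact ⟨Or.inl this.1, this.2⟩
    · have := Sp_lang P₂ Q w₁ w₂ h
      exact ⟨Or.inr this.1, this.2⟩
  | .cat P₁ P₂, Q, w₁, w₂, h => by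
    obtain ⟨a, b, rfl, h1, h2⟩ := h
    have H1 := Sp_lang P₁ (.cat P₂ Q) a (b ++ w₂) h1
    have H2 := Sp_lang P₂ Q b w₂ h2
    exact ⟨Language.mem_mul.mpr ⟨a, H1.1, b, H2.1, rfl⟩, H2.2⟩
  | .star P, Q, w₁, w₂, h => ⟨h.1, h.2.1⟩

lemma Sp_congr {A : Type} : ∀ (P : Pat A) {Q Q' : Pat A}, Q.lang = Q'.lang →
    ∀ {w₁ w₂ : List A}, Sp P Q w₁ w₂ ↔ Sp P Q' w₁ w₂
  | .eps, Q, Q', h, w₁, w₂ => by simp [Sp, h]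
  | .ch a, Q, Q', h, w₁, w₂ => by simp [Sp, h]
  | .plus P₁ P₂, Q, Q', h, w₁, w₂ => by
    simp only [Sp, h, Sp_congr P₁ h, Sp_congr P₂ h]
  | .cat P₁ P₂, Q, Q', h, w₁, w₂ => by
    have h' : (Pat.cat P₂ Q).lang = (Pat.cat P₂ Q').lang := by
      show P₂.lang * Q.lang = P₂.lang * Q'.lang
      rw [h]
    simp only [Sp, Sp_congr P₁ h', Sp_congr P₂ h]
  | .star P, Q, Q', h, w₁, w₂ => by simp [Sp, h]

lemma Sp_strip {A : Type} : ∀ (P : Pat A) {Q₂ Q₃ : Pat A} {a u v : List A},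
    Sp P (.cat Q₂ Q₃) a (u ++ v) → Sp Q₂ Q₃ u v → Sp P Q₂ a u
  | .eps, Q₂, Q₃, a, u, v, h, hs => ⟨h.1, (Sp_lang _ _ _ _ hs).1⟩
  | .ch c, Q₂, Q₃, a, u, v, h, hs => ⟨h.1, (Sp_lang _ _ _ _ hs).1⟩
  | .plus P₁ P₂, Q₂, Q₃, a, u, v, h, hs => by
    rcases h with h | ⟨h, hn⟩
    · exact Or.inl (Sp_strip P₁ h hs)
    · refine Or.inr ⟨Sp_strip P₂ h hs, ?_⟩
      intro hmem
      apply hn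
      obtain ⟨x, hx, y, hy, hxy⟩ := Language.mem_mul.mp hmem
      have hv : v ∈ Q₃.lang := (Sp_lang _ _ _ _ hs).2
      refine Language.mem_mul.mpr ⟨x, hx, y ++ v, ?_, by rw [← List.append_assoc, hxy, List.append_assoc]⟩
      exact Language.mem_mul.mpr ⟨y, hy, v, hv, rfl⟩
  | .cat P₁ P₂, Q₂, Q₃, a, u, v, h, hs => by
    obtain ⟨x, y, rfl, h1, h2⟩ := h
    have h2' : Sp P₂ Q₂ y u := Sp_strip P₂ h2 hs
    have hcong : (Pat.cat P₂ (Pat.cat Q₂ Q₃)).lang = (Pat.cat (Pat.cat P₂ Q₂) Q₃).lang := by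
      show P₂.lang * (Q₂.lang * Q₃.lang) = (P₂.lang * Q₂.lang) * Q₃.lang
      rw [mul_assoc]
    have h1' : Sp P₁ (.cat (.cat P₂ Q₂) Q₃) x ((y ++ u) ++ v) := by
      rw [← Sp_congr P₁ hcong]
      simpa [List.append_assoc] using h1
    have hs' : Sp (.cat P₂ Q₂) Q₃ (y ++ u) v := ⟨y, u, rfl, by simpa [List.append_assoc] using h2, hs⟩
    exact ⟨x, y, rfl, Sp_strip P₁ h1' hs', h2'⟩
  | .star P, Q₂, Q₃, a, u, v, h, hs => by
    obtain ⟨ha, huv, hn⟩ := h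
    refine ⟨ha, (Sp_lang _ _ _ _ hs).1, ?_⟩
    rintro ⟨w₃, w₄, hne, rfl, hmem, hw₄⟩
    apply hn
    refine ⟨w₃, w₄ ++ v, hne, by simp, hmem, ?_⟩
    have hv : v ∈ Q₃.lang := (Sp_lang _ _ _ _ hs).2
    exact Language.mem_mul.mpr ⟨w₄, hw₄, v, hv, rfl⟩

lemma Sp_exists {A : Type} : ∀ (P Q : Pat A) (w : List A), w ∈ P.lang * Q.lang →
    ∃ w₁ w₂, w = w₁ ++ w₂ ∧ Sp P Q w₁ w₂
  | .eps, Q, w, h => by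
    obtain ⟨x, hx, y, hy, rfl⟩ := Language.mem_mul.mp h
    obtain rfl : x = [] := hx
    exact ⟨[], y, rfl, rfl, hy⟩
  | .ch a, Q, w, h => by
    obtain ⟨x, hx, y, hy, rfl⟩ := Language.mem_mul.mp h
    obtain rfl : x = [a] := hx
    exact ⟨[a], y, rfl, rfl, hy⟩
  | .plus P₁ P₂, Q, w, h => by
    by_cases h1 : w ∈ P₁.lang * Q.lang
    · obtain ⟨w₁, w₂, rfl, hsp⟩ := Sp_exists P₁ Q w h1
      exact ⟨w₁, w₂, rfl, Or.inl hsp⟩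
    · have h2 : w ∈ P₂.lang * Q.lang := by
        have : w ∈ (P₁.lang + P₂.lang) * Q.lang := h
        rw [add_mul] at this
        rcases this with h' | h'
        · exact absurd h' h1
        · exact h'
      obtain ⟨w₁, w₂, rfl, hsp⟩ := Sp_exists P₂ Q w h2
      exact ⟨w₁, w₂, rfl, Or.inr ⟨hsp, h1⟩⟩
  | .cat P₁ P₂, Q, w, h => by
    have h' : w ∈ P₁.lang * (Pat.cat P₂ Q).lang := by
      have : w ∈ (P₁.lang * P₂.lang) * Q.lang := h
      rwa [mul_assoc] at this
    obtain ⟨x, r, rfl, hsp1⟩ := Sp_exists P₁ (.cat P₂ Q) w h'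
    have hr : r ∈ P₂.lang * Q.lang := (Sp_lang _ _ _ _ hsp1).2
    obtain ⟨y, z, rfl, hsp2⟩ := Sp_exists P₂ Q r hr
    exact ⟨x ++ y, z, by simp, x, y, rfl, by simpa [List.append_assoc] using hsp1, hsp2⟩
  | .star P, Q, w, h => by
    classical
    set S : Language A := (Pat.star P).lang with hS
    let T : Finset ℕ := (Finset.range (w.length + 1)).filter
      (fun k => w.take k ∈ S ∧ w.drop k ∈ Q.lang)
    have hTne : T.Nonempty := by
      obtain ⟨x, hx, y, hy, hxy⟩ := Language.mem_mul.mp h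
      refine ⟨x.length, Finset.mem_filter.mpr ⟨Finset.mem_range.mpr ?_, ?_, ?_⟩⟩
      · have : x.length ≤ w.length := by
          rw [← hxy]; simp
        omega
      · rw [← hxy, List.take_left]; exact hx
      · rw [← hxy, List.drop_left]; exact hy
    set k := T.max' hTne with hk
    have hkT : k ∈ T := T.max'_mem hTne
    obtain ⟨hkr, hk1, hk2⟩ := Finset.mem_filter.mp hkT
    refine ⟨w.take k, w.drop k, (List.take_append_drop k w).symm, hk1, hk2, ?_⟩
    rintro ⟨w₃, w₄, hne, hsplit, hmem, hw₄⟩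
    have hw : w = (w.take k ++ w₃) ++ w₄ := by
      conv_lhs => rw [← List.take_append_drop k w]
      rw [hsplit, List.append_assoc]
    have hk' : k + w₃.length ∈ T := by
      have hlen : (w.take k ++ w₃).length = k + w₃.length := by
        have : k ≤ w.length := by
          have := Finset.mem_range.mp hkr; omega
        simp [List.length_take, this]
      refine Finset.mem_filter.mpr ⟨Finset.mem_range.mpr ?_, ?_, ?_⟩
      · have : (w.take k ++ w₃).length + w₄.length = w.length := by
          rw [← List.length_append, ← hw]
        omega
      · rw [hw, List.take_left' hlen]; exact hmem
      · rw [hw, List.drop_left' hlen]; exact hw₄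
    have := T.le_max' _ hk'
    rw [← hk] at this
    have : w₃.length = 0 := by omega
    exact hne (List.length_eq_zero_iff.mp this)

section MatchTheory
variable {A : Type}

theorem sound_both :
    (∀ {w : List A} {P V}, Match w P V → w ∈ P.lang) ∧
    (∀ {w₁ w₂ : List A} {P Q V₁ V₂}, CMatch w₁ w₂ P Q V₁ V₂ → Sp P Q w₁ w₂) := by
  refine ⟨@Match.rec A (fun w P V _ => w ∈ P.lang)
      (fun w₁ w₂ P Q V₁ V₂ _ => Sp P Q w₁ w₂)
      ?e ?l ?ke ?kc ?o1 ?o2 ?ce ?c0 ?cl ?co1 ?co2 ?cc ?ck,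
    @CMatch.rec A (fun w P V _ => w ∈ P.lang)
      (fun w₁ w₂ P Q V₁ V₂ _ => Sp P Q w₁ w₂)
      ?e ?l ?ke ?kc ?o1 ?o2 ?ce ?c0 ?cl ?co1 ?co2 ?cc ?ck⟩
  case e => exact Language.nil_mem_one ..
  case l => intro a; rfl
  case ke => intro P; exact Language.nil_mem_kstar _
  case kc =>
    intro w₁ w₂ P V₁ V₂ _ _ _ ih1 ih2
    have h2 : w₁ ++ w₂ ∈ 1 + P.lang * P.lang∗ :=
      Or.inr (Language.mem_mul.mpr ⟨w₁, ih1, w₂, ih2, rfl⟩)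
    rw [Language.one_add_self_mul_kstar_eq_kstar] at h2
    exact h2
  case o1 => intro w P₁ P₂ V _ ih; exact Or.inl ih
  case o2 => intro w P₁ P₂ V _ hn ih; exact Or.inr ih
  case ce =>
    intro w₁ w₂ P₁ P₂ V₁ V₂ _ ih
    have := Sp_lang _ _ _ _ ih
    exact Language.mem_mul.mpr ⟨w₁, this.1, w₂, this.2, rfl⟩
  case c0 => intro w P V₂ _ ih; exact ⟨rfl, ih⟩
  case cl => intro a w P V₁ V₂ _ _ _ ih; exact ⟨rfl, ih⟩
  case co1 => intro w₁ w₂ P₁ P₂ P₃ V₁ V₂ _ ih; exact Or.inl ih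
  case co2 => intro w₁ w₂ P₁ P₂ P₃ V₁ V₂ _ hn ih; exact Or.inr ⟨ih, hn⟩
  case cc =>
    intro w₁ w₂ w₃ P₁ P₂ P₃ V₁ V₂ V₃ W _ _ ih1 ih2
    exact ⟨w₁, w₂, rfl, by simpa [List.append_assoc] using ih1, ih2⟩
  case ck =>
    intro w₁ w₂ P₁ P₂ V₁ V₂ _ _ hn ih1 ih2
    exact ⟨ih1, ih2, hn⟩

theorem match_sound {w : List A} {P V} (h : Match w P V) : w ∈ P.lang := sound_both.1 h
theorem cmatch_sound {w₁ w₂ : List A} {P Q V₁ V₂} (h : CMatch w₁ w₂ P Q V₁ V₂) :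
    Sp P Q w₁ w₂ := sound_both.2 h

theorem root_both :
    (∀ {w : List A} {P V}, Match w P V → V [] = some w) ∧
    (∀ {w₁ w₂ : List A} {P Q V₁ V₂}, CMatch w₁ w₂ P Q V₁ V₂ →
      V₁ [] = some w₁ ∧ V₂ [] = some w₂) := by
  refine ⟨@Match.rec A (fun w P V _ => V [] = some w)
      (fun w₁ w₂ P Q V₁ V₂ _ => V₁ [] = some w₁ ∧ V₂ [] = some w₂)
      ?e ?l ?ke ?kc ?o1 ?o2 ?ce ?c0 ?cl ?co1 ?co2 ?cc ?ck,
    @CMatch.rec A (fun w P V _ => V [] = some w)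
      (fun w₁ w₂ P Q V₁ V₂ _ => V₁ [] = some w₁ ∧ V₂ [] = some w₂)
      ?e ?l ?ke ?kc ?o1 ?o2 ?ce ?c0 ?cl ?co1 ?co2 ?cc ?ck⟩
  case e => rfl
  case l => intro a; rfl
  case ke => intro P; rfl
  case kc => intro w₁ w₂ P V₁ V₂ _ _ _ _ _; rfl
  case o1 => intro w P₁ P₂ V _ ih; exact ih
  case o2 => intro w P₁ P₂ V _ _ ih; exact ih
  case ce =>
    intro w₁ w₂ P₁ P₂ V₁ V₂ _ ih
    show (match V₁ [], V₂ [] with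
      | some u, some v => some (u ++ v)
      | _, _ => none) = some (w₁ ++ w₂)
    rw [ih.1, ih.2]
  case c0 => intro w P V₂ _ ih; exact ⟨rfl, ih⟩
  case cl => intro a w P V₁ V₂ _ _ ih1 ih2; exact ⟨ih1, ih2⟩
  case co1 => intro w₁ w₂ P₁ P₂ P₃ V₁ V₂ _ ih; exact ⟨ih.1, ih.2⟩
  case co2 => intro w₁ w₂ P₁ P₂ P₃ V₁ V₂ _ _ ih; exact ⟨ih.1, ih.2⟩
  case cc =>
    intro w₁ w₂ w₃ P₁ P₂ P₃ V₁ V₂ V₃ W _ _ ih1 ih2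
    refine ⟨?_, ih2.2⟩
    show (match V₁ [], V₂ [] with
      | some u, some v => some (u ++ v)
      | _, _ => none) = some (w₁ ++ w₂)
    rw [ih1.1, ih2.1]
  case ck =>
    intro w₁ w₂ P₁ P₂ V₁ V₂ _ _ _ ih1 ih2
    exact ⟨ih1, ih2⟩

theorem match_root {w : List A} {P V} (h : Match w P V) : V [] = some w := root_both.1 h

end MatchTheory

section Inv
variable {A : Type}

lemma match_eps_inv {w : List A} {V} (h : Match w .eps V) : w = [] ∧ V = single [] := by
  cases h; exact ⟨rfl, rfl⟩

lemma match_ch_inv {w : List A} {a : A} {V} (h : Match w (.ch a) V) :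
    w = [a] ∧ V = single [a] := by
  cases h; exact ⟨rfl, rfl⟩

lemma match_star_inv {w : List A} {P : Pat A} {V} (h : Match w (.star P) V) :
    V = single w := by
  cases h <;> rfl

lemma match_plus_inv {w : List A} {P₁ P₂ : Pat A} {V} (h : Match w (.plus P₁ P₂) V) :
    (∃ V', Match w P₁ V' ∧ V = orL V') ∨
      (∃ V', Match w P₂ V' ∧ w ∉ P₁.lang ∧ V = orR V') := by
  cases h with
  | or1 h' => exact Or.inl ⟨_, h', rfl⟩
  | or2 h' hn => exact Or.inr ⟨_, h', hn, rfl⟩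

lemma match_cat_inv {w : List A} {P₁ P₂ : Pat A} {V} (h : Match w (.cat P₁ P₂) V) :
    ∃ w₁ w₂ V₁ V₂, w = w₁ ++ w₂ ∧ CMatch w₁ w₂ P₁ P₂ V₁ V₂ ∧ V = catA V₁ V₂ := by
  cases h with
  | celem hc => exact ⟨_, _, _, _, rfl, hc, rfl⟩

lemma cmatch_eps_inv {w₁ w₂ : List A} {Q : Pat A} {V₁ V₂} (h : CMatch w₁ w₂ .eps Q V₁ V₂) :
    w₁ = [] ∧ V₁ = single [] ∧ Match w₂ Q V₂ := by
  cases h; exact ⟨rfl, rfl, by assumption⟩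

lemma cmatch_ch_inv {w₁ w₂ : List A} {a : A} {Q : Pat A} {V₁ V₂}
    (h : CMatch w₁ w₂ (.ch a) Q V₁ V₂) :
    w₁ = [a] ∧ Match [a] (Pat.ch a) V₁ ∧ Match w₂ Q V₂ := by
  cases h; exact ⟨rfl, by assumption, by assumption⟩

lemma cmatch_plus_inv {w₁ w₂ : List A} {P₁ P₂ Q : Pat A} {V₁ V₂}
    (h : CMatch w₁ w₂ (.plus P₁ P₂) Q V₁ V₂) :
    (∃ U, CMatch w₁ w₂ P₁ Q U V₂ ∧ V₁ = orL U) ∨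
      (∃ U, CMatch w₁ w₂ P₂ Q U V₂ ∧ w₁ ++ w₂ ∉ (Pat.cat P₁ Q).lang ∧ V₁ = orR U) := by
  cases h with
  | cor1 hc => exact Or.inl ⟨_, hc, rfl⟩
  | cor2 hc hn => exact Or.inr ⟨_, hc, hn, rfl⟩

lemma cmatch_cat_inv {w₁ w₂ : List A} {P₁ P₂ Q : Pat A} {V₁ V₂}
    (h : CMatch w₁ w₂ (.cat P₁ P₂) Q V₁ V₂) :
    ∃ a b U₁ U₂ W, w₁ = a ++ b ∧ CMatch a (b ++ w₂) P₁ (.cat P₂ Q) U₁ W ∧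
      CMatch b w₂ P₂ Q U₂ V₂ ∧ V₁ = catA U₁ U₂ := by
  cases h with
  | ccon hc1 hc2 => exact ⟨_, _, _, _, _, rfl, hc1, hc2, rfl⟩

lemma cmatch_star_inv {w₁ w₂ : List A} {P Q : Pat A} {V₁ V₂}
    (h : CMatch w₁ w₂ (.star P) Q V₁ V₂) :
    Match w₁ (.star P) V₁ ∧ Match w₂ Q V₂ ∧
      ¬ ∃ w₃ w₄, w₃ ≠ [] ∧ w₂ = w₃ ++ w₄ ∧
        w₁ ++ w₃ ∈ (Pat.star P).lang ∧ w₄ ∈ Q.lang := by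
  cases h; exact ⟨by assumption, by assumption, by assumption⟩

end Inv

section Det
variable {A : Type}

theorem det_both :
    (∀ {w : List A} {P V}, Match w P V → ∀ V', Match w P V' → V = V') ∧
    (∀ {w₁ w₂ : List A} {P Q V₁ V₂}, CMatch w₁ w₂ P Q V₁ V₂ →
      ∀ w₁' w₂' V₁' V₂', w₁ ++ w₂ = w₁' ++ w₂' → CMatch w₁' w₂' P Q V₁' V₂' →
        w₁ = w₁' ∧ w₂ = w₂' ∧ V₁ = V₁' ∧ V₂ = V₂') := by
  refine ⟨@Match.rec A (fun w P V _ => ∀ V', Match w P V' → V = V')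
      (fun w₁ w₂ P Q V₁ V₂ _ => ∀ w₁' w₂' V₁' V₂', w₁ ++ w₂ = w₁' ++ w₂' →
        CMatch w₁' w₂' P Q V₁' V₂' → w₁ = w₁' ∧ w₂ = w₂' ∧ V₁ = V₁' ∧ V₂ = V₂')
      ?e ?l ?ke ?kc ?o1 ?o2 ?ce ?c0 ?cl ?co1 ?co2 ?cc ?ck,
    @CMatch.rec A (fun w P V _ => ∀ V', Match w P V' → V = V')
      (fun w₁ w₂ P Q V₁ V₂ _ => ∀ w₁' w₂' V₁' V₂', w₁ ++ w₂ = w₁' ++ w₂' →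
        CMatch w₁' w₂' P Q V₁' V₂' → w₁ = w₁' ∧ w₂ = w₂' ∧ V₁ = V₁' ∧ V₂ = V₂')
      ?e ?l ?ke ?kc ?o1 ?o2 ?ce ?c0 ?cl ?co1 ?co2 ?cc ?ck⟩
  case e => intro V' h'; exact (match_eps_inv h').2.symm
  case l => intro a V' h'; exact (match_ch_inv h').2.symm
  case ke => intro P V' h'; exact (match_star_inv h').symm
  case kc =>
    intro w₁ w₂ P V₁ V₂ h1 h2 hne ih1 ih2 V' h'
    exact (match_star_inv h').symm
  case o1 =>
    intro w P₁ P₂ V h ih V' h'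
    cases h' with
    | or1 h'' => rw [ih _ h'']
    | or2 h'' hn => exact absurd (match_sound h) hn
  case o2 =>
    intro w P₁ P₂ V h hn ih V' h'
    cases h' with
    | or1 h'' => exact absurd (match_sound h'') hn
    | or2 h'' hn' => rw [ih _ h'']
  case ce =>
    intro w₁ w₂ P₁ P₂ V₁ V₂ hc ih V' h'
    obtain ⟨u₁, u₂, U₁, U₂, hw, hc', rfl⟩ := match_cat_inv h'
    obtain ⟨rfl, rfl, rfl, rfl⟩ := ih _ _ _ _ hw hc'
    rfl
  case c0 =>
    intro w P V₂ h ih w₁' w₂' V₁' V₂' heq h'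
    cases h' with
    | cempty h'' =>
      obtain rfl : w = w₂' := by simpa using heq
      exact ⟨rfl, rfl, rfl, ih _ h''⟩
  case cl =>
    intro a w P V₁ V₂ h1 h2 ih1 ih2 w₁' w₂' V₁' V₂' heq h'
    cases h' with
    | clab h1' h2' =>
      obtain rfl : w = w₂' := by simpa using heq
      exact ⟨rfl, rfl, ih1 _ h1', ih2 _ h2'⟩
  case co1 =>
    intro w₁ w₂ P₁ P₂ P₃ V₁ V₂ hc ih w₁' w₂' V₁' V₂' heq h'
    cases h' with
    | cor1 hc' =>
      obtain ⟨rfl, rfl, rfl, rfl⟩ := ih _ _ _ _ heq hc'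
      exact ⟨rfl, rfl, rfl, rfl⟩
    | cor2 hc' hn =>
      exfalso
      apply hn
      rw [← heq]
      have := Sp_lang _ _ _ _ (cmatch_sound hc)
      exact Language.mem_mul.mpr ⟨w₁, this.1, w₂, this.2, rfl⟩
  case co2 =>
    intro w₁ w₂ P₁ P₂ P₃ V₁ V₂ hc hn ih w₁' w₂' V₁' V₂' heq h'
    cases h' with
    | cor1 hc' =>
      exfalso
      apply hn
      rw [heq]
      have := Sp_lang _ _ _ _ (cmatch_sound hc')
      exact Language.mem_mul.mpr ⟨w₁', this.1, w₂', this.2, rfl⟩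
    | cor2 hc' hn' =>
      obtain ⟨rfl, rfl, rfl, rfl⟩ := ih _ _ _ _ heq hc'
      exact ⟨rfl, rfl, rfl, rfl⟩
  case cc =>
    intro w₁ w₂ w₃ P₁ P₂ P₃ V₁ V₂ V₃ W hc1 hc2 ih1 ih2 w₁' w₂' V₁' V₂' heq h'
    obtain ⟨a, b, U₁, U₂, W', rfl, hc1', hc2', rfl⟩ := cmatch_cat_inv h'
    obtain ⟨rfl, heq2, rfl, rfl⟩ := ih1 a (b ++ w₂') U₁ W'
      (by simpa [List.append_assoc] using heq) hc1'
    obtain ⟨rfl, rfl, rfl, rfl⟩ := ih2 b w₂' U₂ V₂' heq2 hc2'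
    exact ⟨rfl, rfl, rfl, rfl⟩
  case ck =>
    intro w₁ w₂ P₁ P₂ V₁ V₂ h1 h2 hn ih1 ih2 w₁' w₂' V₁' V₂' heq h'
    cases h' with
    | ckleene h1' h2' hn' =>
      rcases List.append_eq_append_iff.mp heq with ⟨a', ha1, ha2⟩ | ⟨c', hc1, hc2⟩
      · rcases eq_or_ne a' [] with rfl | hane
        · obtain rfl : w₁ = w₁' := by simpa using ha1.symm
          obtain rfl : w₂ = w₂' := by simpa using ha2
          exact ⟨rfl, rfl, ih1 _ h1', ih2 _ h2'⟩
        · exfalso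
          apply hn
          refine ⟨a', w₂', hane, ha2, ?_, match_sound h2'⟩
          rw [← ha1]
          exact match_sound h1'
      · rcases eq_or_ne c' [] with rfl | hcne
        · obtain rfl : w₁ = w₁' := by simpa using hc1
          obtain rfl : w₂ = w₂' := by simpa using hc2.symm
          exact ⟨rfl, rfl, ih1 _ h1', ih2 _ h2'⟩
        · exfalso
          apply hn'
          refine ⟨c', w₂, hcne, hc2, ?_, match_sound h2⟩
          rw [← hc1]
          exact match_sound h1

theorem match_det {w : List A} {P V V'} (h : Match w P V) (h' : Match w P V') : V = V' :=
  det_both.1 h V' h'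

end Det

section Total
variable {A : Type}

lemma star_total {P : Pat A} (hP : ∀ w ∈ P.lang, ∃ V, Match w P V) :
    ∀ w ∈ (Pat.star P).lang, ∃ V, Match w (.star P) V := by
  intro w hw
  have hw' : w ∈ P.lang∗ := hw
  rw [Language.mem_kstar_iff_exists_nonempty] at hw'
  obtain ⟨S, rfl, hS⟩ := hw'
  clear hw
  induction S with
  | nil => exact ⟨_, Match.kleeneEmpty P⟩
  | cons y S ih =>
    obtain ⟨V₂, hV₂⟩ := ih (fun z hz => hS z (by simp [hz]))
    obtain ⟨V₁, hV₁⟩ := hP y (hS y (by simp)).1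
    exact ⟨_, Match.kleeneClosure hV₁ hV₂ (hS y (by simp)).2⟩

theorem total_pair : ∀ P : Pat A,
    (∀ w ∈ P.lang, ∃ V, Match w P V) ∧
    (∀ Q : Pat A, (∀ w ∈ Q.lang, ∃ V, Match w Q V) →
      ∀ w₁ w₂, Sp P Q w₁ w₂ →
        ∃ V₁ V₂, CMatch w₁ w₂ P Q V₁ V₂ ∧ Match w₁ P V₁ ∧ Match w₂ Q V₂) := by
  intro P
  induction P with
  | eps =>
    constructor
    · intro w hw
      obtain rfl : w = [] := hw
      exact ⟨_, Match.empty⟩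
    · intro Q hQ w₁ w₂ hsp
      obtain ⟨rfl, hw₂⟩ := hsp
      obtain ⟨V₂, hV₂⟩ := hQ w₂ hw₂
      exact ⟨_, _, CMatch.cempty hV₂, Match.empty, hV₂⟩
  | ch a =>
    constructor
    · intro w hw
      obtain rfl : w = [a] := hw
      exact ⟨_, Match.lab a⟩
    · intro Q hQ w₁ w₂ hsp
      obtain ⟨rfl, hw₂⟩ := hsp
      obtain ⟨V₂, hV₂⟩ := hQ w₂ hw₂
      exact ⟨_, _, CMatch.clab (Match.lab a) hV₂, Match.lab a, hV₂⟩
  | plus P₁ P₂ ih1 ih2 =>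
    constructor
    · intro w hw
      by_cases h1 : w ∈ P₁.lang
      · obtain ⟨V, hV⟩ := ih1.1 w h1
        exact ⟨_, Match.or1 hV⟩
      · have h2 : w ∈ P₂.lang := by
          rcases hw with h | h
          · exact absurd h h1
          · exact h
        obtain ⟨V, hV⟩ := ih2.1 w h2
        exact ⟨_, Match.or2 hV h1⟩
    · intro Q hQ w₁ w₂ hsp
      rcases hsp with hsp | ⟨hsp, hn⟩
      · obtain ⟨V₁, V₂, hc, hM1, hM2⟩ := ih1.2 Q hQ w₁ w₂ hsp
        exact ⟨_, _, CMatch.cor1 hc, Match.or1 hM1, hM2⟩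
      · obtain ⟨V₁, V₂, hc, hM1, hM2⟩ := ih2.2 Q hQ w₁ w₂ hsp
        have hn1 : w₁ ∉ P₁.lang := by
          intro hmem
          exact hn (Language.mem_mul.mpr ⟨w₁, hmem, w₂, (Sp_lang _ _ _ _ hsp).2, rfl⟩)
        exact ⟨_, _, CMatch.cor2 hc hn, Match.or2 hM1 hn1, hM2⟩
  | cat P₁ P₂ ih1 ih2 =>
    have key : ∀ Q : Pat A, (∀ w ∈ Q.lang, ∃ V, Match w Q V) →
        ∀ w₁ w₂, Sp (.cat P₁ P₂) Q w₁ w₂ →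
          ∃ V₁ V₂, CMatch w₁ w₂ (.cat P₁ P₂) Q V₁ V₂ ∧
            Match w₁ (.cat P₁ P₂) V₁ ∧ Match w₂ Q V₂ := by
      intro Q hQ w₁ w₂ hsp
      obtain ⟨a, b, rfl, h1, h2⟩ := hsp
      have hcatQtot : ∀ w ∈ (Pat.cat P₂ Q).lang, ∃ V, Match w (.cat P₂ Q) V := by
        intro w hw
        obtain ⟨x, y, rfl, hsp'⟩ := Sp_exists P₂ Q w hw
        obtain ⟨U₁, U₂, hc, _, _⟩ := ih2.2 Q hQ x y hsp'
        exact ⟨_, Match.celem hc⟩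
      obtain ⟨U₁, W, hcU, hMa, _⟩ := ih1.2 (.cat P₂ Q) hcatQtot a (b ++ w₂) h1
      obtain ⟨U₂, V₂, hcU2, hMb, hMw₂⟩ := ih2.2 Q hQ b w₂ h2
      have hcc := CMatch.ccon hcU hcU2
      have hsp12 : Sp P₁ P₂ a b := Sp_strip P₁ h1 h2
      obtain ⟨U₁', U₂', hc', hMa', hMb'⟩ := ih1.2 P₂ ih2.1 a b hsp12
      obtain rfl : U₁' = U₁ := match_det hMa' hMa
      obtain rfl : U₂' = U₂ := match_det hMb' hMb
      exact ⟨_, _, hcc, Match.celem hc', hMw₂⟩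
    refine ⟨?_, key⟩
    intro w hw
    obtain ⟨x, y, rfl, hsp'⟩ := Sp_exists P₁ P₂ w hw
    obtain ⟨U₁, U₂, hc, _, _⟩ := ih1.2 P₂ ih2.1 x y hsp'
    exact ⟨_, Match.celem hc⟩
  | star P ih =>
    refine ⟨star_total ih.1, ?_⟩
    intro Q hQ w₁ w₂ hsp
    obtain ⟨h1, h2, hn⟩ := hsp
    obtain ⟨V₁, hV₁⟩ := star_total ih.1 w₁ h1
    obtain ⟨V₂, hV₂⟩ := hQ w₂ h2
    exact ⟨_, _, CMatch.ckleene hV₁ hV₂ hn, hV₁, hV₂⟩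

theorem match_total {P : Pat A} {w : List A} (h : w ∈ P.lang) : ∃ V, Match w P V :=
  (total_pair P).1 w h

theorem sp_total {P Q : Pat A} {w₁ w₂ : List A} (h : Sp P Q w₁ w₂) :
    ∃ V₁ V₂, CMatch w₁ w₂ P Q V₁ V₂ ∧ Match w₁ P V₁ ∧ Match w₂ Q V₂ :=
  (total_pair P).2 Q (total_pair Q).1 w₁ w₂ h

theorem cmatch_comp {P Q : Pat A} {w₁ w₂ : List A} {V₁ V₂}
    (h : CMatch w₁ w₂ P Q V₁ V₂) : Match w₁ P V₁ ∧ Match w₂ Q V₂ := by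
  obtain ⟨U₁, U₂, hc, hM1, hM2⟩ := sp_total (cmatch_sound h)
  obtain ⟨-, -, rfl, rfl⟩ := det_both.2 h w₁ w₂ U₁ U₂ rfl hc
  exact ⟨hM1, hM2⟩

end Total

section TypeEq
variable {A : Type}

theorem typeOf_nil (P : Pat A) (C : Set (List A)) :
    typeOf [] P C = C ∩ P.lang := by
  ext w
  constructor
  · rintro ⟨w', hC, V, hM, hV⟩
    obtain rfl : w' = w := by
      have := match_root hM
      rw [this] at hV
      exact Option.some_injective _ hV
    exact ⟨hC, match_sound hM⟩
  · rintro ⟨hC, hl⟩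
    obtain ⟨V, hV⟩ := match_total hl
    exact ⟨w, hC, V, hV, match_root hV⟩

theorem typeOf_plus_one (P₁ P₂ : Pat A) (m : Node) (C : Set (List A)) :
    typeOf (1 :: m) (.plus P₁ P₂) C = typeOf m P₁ (C ∩ P₁.lang) := by
  ext w
  constructor
  · rintro ⟨w', hC, V, hM, hV⟩
    rcases match_plus_inv hM with ⟨V', hM', rfl⟩ | ⟨V', hM', hn, rfl⟩
    · exact ⟨w', ⟨hC, match_sound hM'⟩, V', hM', hV⟩
    · simp [orR] at hV
  · rintro ⟨w', ⟨hC, h1⟩, V, hM, hV⟩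
    exact ⟨w', hC, orL V, Match.or1 hM, hV⟩

theorem typeOf_plus_two (P₁ P₂ : Pat A) (m : Node) (C : Set (List A)) :
    typeOf (2 :: m) (.plus P₁ P₂) C = typeOf m P₂ (C ∩ (P₂.lang \ P₁.lang)) := by
  ext w
  constructor
  · rintro ⟨w', hC, V, hM, hV⟩
    rcases match_plus_inv hM with ⟨V', hM', rfl⟩ | ⟨V', hM', hn, rfl⟩
    · simp [orL] at hV
    · exact ⟨w', ⟨hC, match_sound hM', hn⟩, V', hM', hV⟩
  · rintro ⟨w', ⟨hC, h2, h1⟩, V, hM, hV⟩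
    exact ⟨w', hC, orR V, Match.or2 hM h1, hV⟩

theorem typeOf_cat_one (P₁ P₂ : Pat A) (m : Node) (C : Set (List A)) :
    typeOf (1 :: m) (.cat P₁ P₂) C = typeOf m P₁ {a | ∃ b, a ++ b ∈ C ∧ Sp P₁ P₂ a b} := by
  ext w
  constructor
  · rintro ⟨w', hC, V, hM, hV⟩
    obtain ⟨w₁, w₂, V₁, V₂, rfl, hc, rfl⟩ := match_cat_inv hM
    exact ⟨w₁, ⟨w₂, hC, cmatch_sound hc⟩, V₁, (cmatch_comp hc).1, hV⟩
  · rintro ⟨a, ⟨b, hab, hsp⟩, V, hM, hV⟩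
    obtain ⟨V₁, V₂, hc, hM1, hM2⟩ := sp_total hsp
    obtain rfl : V = V₁ := match_det hM hM1
    exact ⟨a ++ b, hab, catA V V₂, Match.celem hc, hV⟩

theorem typeOf_cat_two (P₁ P₂ : Pat A) (m : Node) (C : Set (List A)) :
    typeOf (2 :: m) (.cat P₁ P₂) C = typeOf m P₂ {b | ∃ a, a ++ b ∈ C ∧ Sp P₁ P₂ a b} := by
  ext w
  constructor
  · rintro ⟨w', hC, V, hM, hV⟩
    obtain ⟨w₁, w₂, V₁, V₂, rfl, hc, rfl⟩ := match_cat_inv hM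
    exact ⟨w₂, ⟨w₁, hC, cmatch_sound hc⟩, V₂, (cmatch_comp hc).2, hV⟩
  · rintro ⟨b, ⟨a, hab, hsp⟩, V, hM, hV⟩
    obtain ⟨V₁, V₂, hc, hM1, hM2⟩ := sp_total hsp
    obtain rfl : V = V₂ := match_det hM hM2
    exact ⟨a ++ b, hab, catA V₁ V, Match.celem hc, hV⟩

end TypeEq


open Computability Classical PatReg

namespace PatReg

variable {A : Type}

/-- Set-to-language coercion helper. -/
def lset {A : Type} (s : Set (List A)) : Language A := s

/-- Recognizable relations on words: finite unions of products of regular languages. -/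
def RegRel (R : List A → List A → Prop) : Prop :=
  ∃ (ι : Type) (_ : Fintype ι) (F G : ι → Language A),
    (∀ i, (F i).IsRegular) ∧ (∀ i, (G i).IsRegular) ∧
    ∀ x y, R x y ↔ ∃ i, x ∈ F i ∧ y ∈ G i

lemma regRel_congr {R R' : List A → List A → Prop} (h : ∀ x y, R x y ↔ R' x y)
    (hR : RegRel R) : RegRel R' := by
  obtain ⟨ι, fι, F, G, hF, hG, hiff⟩ := hR
  exact ⟨ι, fι, F, G, hF, hG, fun x y => (h x y).symm.trans (hiff x y)⟩

lemma regRel_prod {L M : Language A} (hL : L.IsRegular) (hM : M.IsRegular) :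
    RegRel (fun x y => x ∈ L ∧ y ∈ M) :=
  ⟨PUnit, by infer_instance, fun _ => L, fun _ => M, fun _ => hL, fun _ => hM,
    fun x y => ⟨fun h => ⟨PUnit.unit, h⟩, fun ⟨_, h⟩ => h⟩⟩

lemma regRel_union {R S : List A → List A → Prop} (hR : RegRel R) (hS : RegRel S) :
    RegRel (fun x y => R x y ∨ S x y) := by
  obtain ⟨ι, fι, F, G, hF, hG, hiff⟩ := hR
  obtain ⟨κ, fκ, F', G', hF', hG', hiff'⟩ := hS
  refine ⟨ι ⊕ κ, by infer_instance, Sum.elim F F', Sum.elim G G',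
    fun i => by cases i <;> simp [hF, hF'], fun i => by cases i <;> simp [hG, hG'], ?_⟩
  intro x y
  show R x y ∨ S x y ↔ _
  rw [hiff, hiff']
  constructor
  · rintro (⟨i, h⟩ | ⟨j, h⟩)
    · exact ⟨Sum.inl i, h⟩
    · exact ⟨Sum.inr j, h⟩
  · rintro ⟨i | j, h⟩
    · exact Or.inl ⟨i, h⟩
    · exact Or.inr ⟨j, h⟩

lemma regRel_inter {R S : List A → List A → Prop} (hR : RegRel R) (hS : RegRel S) :
    RegRel (fun x y => R x y ∧ S x y) := by
  obtain ⟨ι, fι, F, G, hF, hG, hiff⟩ := hR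
  obtain ⟨κ, fκ, F', G', hF', hG', hiff'⟩ := hS
  refine ⟨ι × κ, by infer_instance, fun p => {x | x ∈ F p.1 ∧ x ∈ F' p.2},
    fun p => {y | y ∈ G p.1 ∧ y ∈ G' p.2},
    fun p => isRegular_inter (hF p.1) (hF' p.2),
    fun p => isRegular_inter (hG p.1) (hG' p.2), ?_⟩
  intro x y
  show R x y ∧ S x y ↔ _
  rw [hiff, hiff']
  constructor
  · rintro ⟨⟨i, h1, h2⟩, ⟨j, h3, h4⟩⟩
    exact ⟨(i, j), ⟨h1, h3⟩, h2, h4⟩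
  · rintro ⟨⟨i, j⟩, ⟨h1, h3⟩, h2, h4⟩
    exact ⟨⟨i, h1, h2⟩, ⟨j, h3, h4⟩⟩

lemma regRel_iInter {ι : Type} [Fintype ι] {R : ι → List A → List A → Prop}
    (h : ∀ i, RegRel (R i)) : RegRel (fun x y => ∀ i, R i x y) := by
  classical
  choose κ fκ F G hF hG hiff using h
  haveI := fκ
  refine ⟨∀ i, κ i, by infer_instance,
    fun f => {x | ∀ i, x ∈ F i (f i)}, fun f => {y | ∀ i, y ∈ G i (f i)}, ?_, ?_, ?_⟩
  · intro f
    have := isRegular_boolComb (fun i => F i (f i)) (fun i => hF i (f i)) {p | ∀ i, p i}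
    exact this
  · intro f
    have := isRegular_boolComb (fun i => G i (f i)) (fun i => hG i (f i)) {p | ∀ i, p i}
    exact this
  · intro x y
    constructor
    · intro hall
      have h2 : ∀ i, ∃ j, x ∈ F i j ∧ y ∈ G i j := fun i => (hiff i x y).mp (hall i)
      choose f hf using h2
      exact ⟨f, fun i => (hf i).1, fun i => (hf i).2⟩
    · rintro ⟨f, h1, h2⟩ i
      exact (hiff i x y).mpr ⟨f i, h1 i, h2 i⟩

lemma regRel_compl {R : List A → List A → Prop} (hR : RegRel R) :
    RegRel (fun x y => ¬ R x y) := by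
  obtain ⟨ι, fι, F, G, hF, hG, hiff⟩ := hR
  have key : ∀ i : ι, RegRel (fun x y : List A => x ∉ F i ∨ y ∉ G i) := by
    intro i
    refine regRel_union (R := fun x y => x ∉ F i) (S := fun x y => y ∉ G i) ?_ ?_
    · refine ⟨PUnit, by infer_instance, fun _ => {x | x ∉ F i}, fun _ => ⊤,
        fun _ => Language.IsRegular.compl' (hF i), fun _ => isRegular_top, ?_⟩
      intro x y
      exact ⟨fun h => ⟨PUnit.unit, h, trivial⟩, fun ⟨_, h, _⟩ => h⟩
    · refine ⟨PUnit, by infer_instance, fun _ => ⊤, fun _ => {y | y ∉ G i},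
        fun _ => isRegular_top, fun _ => Language.IsRegular.compl' (hG i), ?_⟩
      intro x y
      exact ⟨fun h => ⟨PUnit.unit, trivial, h⟩, fun ⟨_, _, h⟩ => h⟩
  have := regRel_iInter key
  refine regRel_congr ?_ this
  intro x y
  constructor
  · intro h hR
    obtain ⟨i, hx, hy⟩ := (hiff x y).mp hR
    rcases h i with h' | h'
    · exact absurd hx h'
    · exact absurd hy h'
  · intro h i
    rcases Classical.em (x ∈ F i) with hx | hx
    · rcases Classical.em (y ∈ G i) with hy | hy
      · exact absurd ((hiff x y).mpr ⟨i, hx, hy⟩) h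
      · exact Or.inr hy
    · exact Or.inl hx

lemma regRel_concatC {C : Language A} (hC : C.IsRegular) :
    RegRel (fun x y => x ++ y ∈ C) := by
  obtain ⟨σ, fσ, M, rfl⟩ := hC
  refine ⟨σ, fσ, fun s => {x | M.eval x = s},
    fun s => {y | M.evalFrom s y ∈ M.accept},
    fun s => isRegular_evalTo M s, fun s => isRegular_evalFromAcc M s, ?_⟩
  intro x y
  show x ++ y ∈ M.accepts ↔ _
  rw [DFA.mem_accepts]
  constructor
  · intro h
    refine ⟨M.eval x, rfl, ?_⟩
    rwa [DFA.eval, DFA.evalFrom_of_append] at h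
  · rintro ⟨s, rfl, h⟩
    show M.evalFrom M.start (x ++ y) ∈ M.accept
    rwa [DFA.evalFrom_of_append]

lemma regRel_E {S M : Language A} (hS : S.IsRegular) (hM : M.IsRegular) :
    RegRel (fun a b => ∃ u v, u ≠ [] ∧ b = u ++ v ∧ a ++ u ∈ S ∧ v ∈ M) := by
  obtain ⟨σ, fσ, N, rfl⟩ := hS
  have hne : Language.IsRegular {u : List A | u ≠ []} := by
    have h1 : {u : List A | u ≠ []} = (fun w => w ∉ (1 : Language A)) := rfl
    rw [h1]
    exact Language.IsRegular.compl' isRegular_one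
  refine ⟨σ, fσ, fun s => {a | N.eval a = s},
    fun s => lset {u : List A | u ∈ {u : List A | N.evalFrom s u ∈ N.accept} ∧
      u ∈ {u : List A | u ≠ []}} * M,
    fun s => isRegular_evalTo N s,
    fun s => IsRegular.mulL (isRegular_inter (isRegular_evalFromAcc N s) hne) hM, ?_⟩
  intro a b
  constructor
  · rintro ⟨u, v, hu, rfl, hau, hv⟩
    refine ⟨N.eval a, rfl, ?_⟩
    refine Language.mem_mul.mpr ⟨u, show _ ∧ _ from ⟨?_, hu⟩, v, hv, rfl⟩
    show N.evalFrom _ u ∈ N.accept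
    have h3 : N.evalFrom N.start (a ++ u) ∈ N.accept := hau
    rwa [DFA.evalFrom_of_append] at h3
  · rintro ⟨s, rfl, hb⟩
    obtain ⟨u, ⟨hu1, hu2⟩, v, hv, rfl⟩ := Language.mem_mul.mp hb
    refine ⟨u, v, hu2, rfl, ?_, hv⟩
    show N.evalFrom N.start (a ++ u) ∈ N.accept
    rwa [DFA.evalFrom_of_append]

lemma regRel_split {R S : List A → List A → Prop} (hR : RegRel R) (hS : RegRel S) :
    RegRel (fun a b => ∃ x y, a = x ++ y ∧ R x (y ++ b) ∧ S y b) := by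
  classical
  obtain ⟨ι, fι, F, G, hF, hG, hiff⟩ := hR
  obtain ⟨κ, fκ, F', G', hF', hG', hiff'⟩ := hS
  -- DFAs for the G i
  have hGdfa := fun i => hG i
  choose σG fσG NG hNG using hGdfa
  haveI := fσG
  refine ⟨Σ i : ι, (σG i × κ), by infer_instance,
    fun p => F p.1 * lset {y : List A | y ∈ {y : List A | (NG p.1).eval y = p.2.1} ∧ y ∈ F' p.2.2},
    fun p => {b : List A | b ∈ {b : List A | (NG p.1).evalFrom p.2.1 b ∈ (NG p.1).accept} ∧
      b ∈ G' p.2.2},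
    ?_, ?_, ?_⟩
  · rintro ⟨i, s, k⟩
    exact IsRegular.mulL (hF i) (isRegular_inter (isRegular_evalTo _ s) (hF' k))
  · rintro ⟨i, s, k⟩
    exact isRegular_inter (isRegular_evalFromAcc _ s) (hG' k)
  · intro a b
    constructor
    · rintro ⟨x, y, rfl, hRxy, hSyb⟩
      obtain ⟨i, hx, hyb⟩ := (hiff x (y ++ b)).mp hRxy
      obtain ⟨k, hy, hb⟩ := (hiff' y b).mp hSyb
      refine ⟨⟨i, (NG i).eval y, k⟩,
        Language.mem_mul.mpr ⟨x, hx, y, show _ ∧ _ from ⟨rfl, hy⟩, rfl⟩, ?_, hb⟩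
      have h3 : (NG i).evalFrom (NG i).start (y ++ b) ∈ (NG i).accept := by
        have h4 := hyb
        rw [← hNG i] at h4
        exact h4
      rw [DFA.evalFrom_of_append] at h3
      exact h3
    · rintro ⟨⟨i, s, k⟩, ha, hb1, hb2⟩
      obtain ⟨x, hx, y, ⟨hy1, hy2⟩, rfl⟩ := Language.mem_mul.mp ha
      refine ⟨x, y, rfl, ?_, (hiff' y b).mpr ⟨k, hy2, hb2⟩⟩
      refine (hiff x (y ++ b)).mpr ⟨i, hx, ?_⟩
      rw [← hNG i, DFA.mem_accepts]
      show (NG i).evalFrom (NG i).start (y ++ b) ∈ (NG i).accept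
      rw [DFA.evalFrom_of_append]
      have hy1' : (NG i).evalFrom (NG i).start y = s := hy1
      rw [hy1']
      exact hb1

end PatReg


open Computability Classical PatReg

namespace PatReg

variable {A : Type}

theorem pat_lang_regular : ∀ P : Pat A, P.lang.IsRegular
  | .eps => isRegular_one
  | .ch a => isRegular_char a
  | .plus P₁ P₂ => isRegular_add (pat_lang_regular P₁) (pat_lang_regular P₂)
  | .cat P₁ P₂ => IsRegular.mulL (pat_lang_regular P₁) (pat_lang_regular P₂)
  | .star P => IsRegular.kstarL (pat_lang_regular P)

theorem regRel_Sp : ∀ P Q : Pat A, RegRel (Sp P Q)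
  | .eps, Q => by
    refine regRel_congr ?_ (regRel_prod isRegular_one (pat_lang_regular Q))
    intro x y
    show (x ∈ (1 : Language A) ∧ y ∈ Q.lang) ↔ (x = [] ∧ y ∈ Q.lang)
    rw [Language.mem_one]
  | .ch a, Q => by
    refine regRel_congr ?_ (regRel_prod (isRegular_char a) (pat_lang_regular Q))
    intro x y
    show (x ∈ ({[a]} : Language A) ∧ y ∈ Q.lang) ↔ (x = [a] ∧ y ∈ Q.lang)
    rfl
  | .plus P₁ P₂, Q => by
    have h1 := regRel_Sp P₁ Q
    have h2 := regRel_Sp P₂ Q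
    have h3 := regRel_compl (regRel_concatC (IsRegular.mulL (pat_lang_regular P₁)
      (pat_lang_regular Q)))
    refine regRel_congr ?_ (regRel_union h1 (regRel_inter h2 h3))
    intro x y
    show (Sp P₁ Q x y ∨ (Sp P₂ Q x y ∧ x ++ y ∉ P₁.lang * Q.lang)) ↔ _
    rfl
  | .cat P₁ P₂, Q => by
    have h1 := regRel_Sp P₁ (.cat P₂ Q)
    have h2 := regRel_Sp P₂ Q
    refine regRel_congr ?_ (regRel_split h1 h2)
    intro x y
    rfl
  | .star P, Q => by
    have h1 := regRel_prod (IsRegular.kstarL (pat_lang_regular P)) (pat_lang_regular Q)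
    have h2 := regRel_compl (regRel_E (IsRegular.kstarL (pat_lang_regular P))
      (pat_lang_regular Q))
    refine regRel_congr ?_ (regRel_inter h1 h2)
    intro x y
    show ((x ∈ P.lang∗ ∧ y ∈ Q.lang) ∧
      ¬ ∃ u v, u ≠ [] ∧ y = u ++ v ∧ x ++ u ∈ P.lang∗ ∧ v ∈ Q.lang) ↔ _
    show _ ↔ (x ∈ (Pat.star P).lang ∧ y ∈ Q.lang ∧
      ¬ ∃ w₃ w₄, w₃ ≠ [] ∧ y = w₃ ++ w₄ ∧ x ++ w₃ ∈ (Pat.star P).lang ∧ w₄ ∈ Q.lang)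
    exact and_assoc

lemma regRel_proj₁ {R : List A → List A → Prop} (hR : RegRel R) {C : Language A}
    (hC : C.IsRegular) : Language.IsRegular {a : List A | ∃ b, a ++ b ∈ C ∧ R a b} := by
  classical
  obtain ⟨ι, fι, F, G, hF, hG, hiff⟩ := hR
  obtain ⟨σ, fσ, N, rfl⟩ := hC
  have hreg : ∀ p : ι × σ, Language.IsRegular
      (if ∃ b ∈ G p.1, N.evalFrom p.2 b ∈ N.accept then
        {a : List A | a ∈ F p.1 ∧ a ∈ {a : List A | N.eval a = p.2}}
      else (∅ : Set (List A))) := by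
    intro p
    by_cases hc : ∃ b ∈ G p.1, N.evalFrom p.2 b ∈ N.accept <;> [erw [if_pos hc]; erw [if_neg hc]]
    · exact isRegular_inter (hF p.1) (isRegular_evalTo N p.2)
    · exact isRegular_empty
  have hU := isRegular_iUnion _ hreg
  have heq : {a : List A | ∃ b, a ++ b ∈ N.accepts ∧ R a b} =
      (fun a => ∃ p : ι × σ, a ∈
        (if ∃ b ∈ G p.1, N.evalFrom p.2 b ∈ N.accept then
          {a : List A | a ∈ F p.1 ∧ a ∈ {a : List A | N.eval a = p.2}}
        else (∅ : Set (List A)))) := by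
    ext a
    constructor
    · rintro ⟨b, hab, hr⟩
      obtain ⟨i, ha, hb⟩ := (hiff a b).mp hr
      refine ⟨(i, N.eval a), ?_⟩
      have hcnd : ∃ b ∈ G i, N.evalFrom (N.eval a) b ∈ N.accept := by
        refine ⟨b, hb, ?_⟩
        have h3 : N.evalFrom N.start (a ++ b) ∈ N.accept := hab
        rwa [DFA.evalFrom_of_append] at h3
      rw [if_pos hcnd]
      exact ⟨ha, rfl⟩
    · rintro ⟨⟨i, s⟩, hmem⟩
      by_cases hcond : ∃ b ∈ G i, N.evalFrom s b ∈ N.accept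
      · rw [if_pos hcond] at hmem
        obtain ⟨ha, hev⟩ := hmem
        obtain ⟨b, hb, hsb⟩ := hcond
        refine ⟨b, ?_, (hiff a b).mpr ⟨i, ha, hb⟩⟩
        show N.evalFrom N.start (a ++ b) ∈ N.accept
        rw [DFA.evalFrom_of_append]
        have : N.evalFrom N.start a = s := hev
        rw [this]
        exact hsb
      · rw [if_neg hcond] at hmem
        exact absurd hmem (Set.notMem_empty a)
  rw [heq]
  exact hU

lemma regRel_proj₂ {R : List A → List A → Prop} (hR : RegRel R) {C : Language A}
    (hC : C.IsRegular) : Language.IsRegular {b : List A | ∃ a, a ++ b ∈ C ∧ R a b} := by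
  classical
  obtain ⟨ι, fι, F, G, hF, hG, hiff⟩ := hR
  obtain ⟨σ, fσ, N, rfl⟩ := hC
  have hreg : ∀ p : ι × σ, Language.IsRegular
      (if ∃ a ∈ F p.1, N.eval a = p.2 then
        {b : List A | b ∈ G p.1 ∧ b ∈ {b : List A | N.evalFrom p.2 b ∈ N.accept}}
      else (∅ : Set (List A))) := by
    intro p
    by_cases hc : ∃ a ∈ F p.1, N.eval a = p.2 <;> [erw [if_pos hc]; erw [if_neg hc]]
    · exact isRegular_inter (hG p.1) (isRegular_evalFromAcc N p.2)
    · exact isRegular_empty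
  have hU := isRegular_iUnion _ hreg
  have heq : {b : List A | ∃ a, a ++ b ∈ N.accepts ∧ R a b} =
      (fun b => ∃ p : ι × σ, b ∈
        (if ∃ a ∈ F p.1, N.eval a = p.2 then
          {b : List A | b ∈ G p.1 ∧ b ∈ {b : List A | N.evalFrom p.2 b ∈ N.accept}}
        else (∅ : Set (List A)))) := by
    ext b
    constructor
    · rintro ⟨a, hab, hr⟩
      obtain ⟨i, ha, hb⟩ := (hiff a b).mp hr
      refine ⟨(i, N.eval a), ?_⟩
      rw [if_pos ⟨a, ha, rfl⟩]
      refine ⟨hb, ?_⟩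
      show N.evalFrom (N.eval a) b ∈ N.accept
      have h3 : N.evalFrom N.start (a ++ b) ∈ N.accept := hab
      rwa [DFA.evalFrom_of_append] at h3
    · rintro ⟨⟨i, s⟩, hmem⟩
      by_cases hcond : ∃ a ∈ F i, N.eval a = s
      · rw [if_pos hcond] at hmem
        obtain ⟨hb, hev⟩ := hmem
        obtain ⟨a, ha, hsa⟩ := hcond
        refine ⟨a, ?_, (hiff a b).mpr ⟨i, ha, hb⟩⟩
        show N.evalFrom N.start (a ++ b) ∈ N.accept
        rw [DFA.evalFrom_of_append]
        have hev' : N.evalFrom s b ∈ N.accept := hev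
        have hsa' : N.evalFrom N.start a = s := hsa
        rw [hsa']
        exact hev'
      · rw [if_neg hcond] at hmem
        exact absurd hmem (Set.notMem_empty b)
  rw [heq]
  exact hU

theorem main : ∀ (P : Pat A) (n : Node), P.Bindable n →
    ∀ C : Language A, C.IsRegular → Language.IsRegular (typeOf n P C) := by
  intro P
  induction P with
  | eps =>
    intro n hn C hC
    cases n with
    | nil =>
      erw [typeOf_nil]
      exact isRegular_inter hC (pat_lang_regular _)
    | cons i m => exact absurd hn (by rcases i with _ | _ | _ | i <;> exact not_false)
  | ch a =>
    intro n hn C hC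
    cases n with
    | nil =>
      erw [typeOf_nil]
      exact isRegular_inter hC (pat_lang_regular _)
    | cons i m => exact absurd hn (by rcases i with _ | _ | _ | i <;> exact not_false)
  | star P ih =>
    intro n hn C hC
    cases n with
    | nil =>
      erw [typeOf_nil]
      exact isRegular_inter hC (pat_lang_regular _)
    | cons i m => exact absurd hn (by rcases i with _ | _ | _ | i <;> exact not_false)
  | plus P₁ P₂ ih1 ih2 =>
    intro n hn C hC
    cases n with
    | nil =>
      erw [typeOf_nil]
      exact isRegular_inter hC (pat_lang_regular _)
    | cons i m =>
      rcases i with _ | _ | _ | i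
      · exact absurd hn not_false
      · erw [typeOf_plus_one]
        exact ih1 m hn _ (isRegular_inter hC (pat_lang_regular P₁))
      · erw [typeOf_plus_two]
        exact ih2 m hn _ (isRegular_inter hC
          (isRegular_diff (pat_lang_regular P₂) (pat_lang_regular P₁)))
      · exact absurd hn not_false
  | cat P₁ P₂ ih1 ih2 =>
    intro n hn C hC
    cases n with
    | nil =>
      erw [typeOf_nil]
      exact isRegular_inter hC (pat_lang_regular _)
    | cons i m =>
      rcases i with _ | _ | _ | i
      · exact absurd hn not_false
      · erw [typeOf_cat_one]
        exact ih1 m hn _ (regRel_proj₁ (regRel_Sp P₁ P₂) hC)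
      · erw [typeOf_cat_two]
        exact ih2 m hn _ (regRel_proj₂ (regRel_Sp P₁ P₂) hC)
      · exact absurd hn not_false

end PatReg


/-- For every pattern `P`, every bindable node `n` of `P`, and
every regular context language `C`, the type `type(n, P, C)` is a regular
language. -/
theorem typeOf_isRegular {A : Type} [Fintype A] (P : Pat A) (n : Node)
    (hn : P.Bindable n) (C : Language A) (hC : C.IsRegular) :
    Language.IsRegular (typeOf n P (C : Set (List A)) : Language A) := by
  exact PatReg.main P n hn C hC
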